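/- arXiv:1907.13578 — 2 statements merged into one kernel-verified Lean document; each statement's English description precedes it below -/
import Mathlib

section
/- Let 𝔅 be a bornology with closed base on a metric space X. Then X satisfies S₁(𝒪_{𝔅ˢ}, Γ_{𝔅ˢ}) if and only if X satisfies S_fin(𝒪_{𝔅ˢ}, Γ_{𝔅ˢ}). -/
open Set Metric Filter

/-- A bornology on a metric space: an ideal of subsets covering `X`. -/
structure BornologyOn (X : Type*) [MetricSpace X] where
  sets : Set (Set X)
  union_mem : ∀ {A B : Set X}, A ∈ sets → B ∈ sets → A ∪ B ∈ sets
  subset_mem : ∀ {A B : Set X}, A ∈ sets → B ⊆ A → B ∈ sets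
  covers : ∀ x : X, ∃ A ∈ sets, x ∈ A

variable {X : Type*} [MetricSpace X]

/-- `𝔅` has a closed base: a cofinal subfamily consisting of closed sets. -/
def HasClosedBase (𝔅 : BornologyOn X) : Prop :=
  ∃ base ⊆ 𝔅.sets, (∀ C ∈ base, IsClosed C) ∧ ∀ A ∈ 𝔅.sets, ∃ C ∈ base, A ⊆ C

/-- The `δ`-enlargement `B^δ = ⋃_{x ∈ B} S(x, δ)`. -/
def enlarge (B : Set X) (δ : ℝ) : Set X := ⋃ x ∈ B, ball x δ

/-- A `𝔅ˢ`-cover: `X ∉ 𝒰` and every `B ∈ 𝔅` has `B^δ ⊆ U` for some `U ∈ 𝒰`, `δ > 0`. -/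
def IsBCover (𝔅 : BornologyOn X) (𝒰 : Set (Set X)) : Prop :=
  univ ∉ 𝒰 ∧ ∀ B ∈ 𝔅.sets, ∃ U ∈ 𝒰, ∃ δ > 0, enlarge B δ ⊆ U

/-- An open `𝔅ˢ`-cover. -/
def IsOpenBCover (𝔅 : BornologyOn X) (𝒰 : Set (Set X)) : Prop :=
  (∀ U ∈ 𝒰, IsOpen U) ∧ (∀ x : X, ∃ U ∈ 𝒰, x ∈ U) ∧ IsBCover 𝔅 𝒰

/-- A `γ_{𝔅ˢ}`-cover (set form): infinite family of open sets such that for each `B ∈ 𝔅`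
all but finitely many members contain some enlargement of `B`. -/
def IsGammaBCover (𝔅 : BornologyOn X) (𝒰 : Set (Set X)) : Prop :=
  𝒰.Infinite ∧ (∀ U ∈ 𝒰, IsOpen U) ∧
    ∀ B ∈ 𝔅.sets, {U ∈ 𝒰 | ¬ ∃ δ > 0, enlarge B δ ⊆ U}.Finite

/-- A `γ_{𝔅ˢ}`-cover given as a sequence `{Uₙ}`: infinite, open, and for each `B ∈ 𝔅`
there are `n₀` and `δₙ > 0` with `B^{δₙ} ⊆ Uₙ` for all `n ≥ n₀`. -/
def IsGammaBSeq (𝔅 : BornologyOn X) (U : ℕ → Set X) : Prop :=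
  (Set.range U).Infinite ∧ (∀ n, IsOpen (U n)) ∧
    ∀ B ∈ 𝔅.sets, ∃ n₀, ∀ n ≥ n₀, ∃ δ > 0, enlarge B δ ⊆ U n

/-- A `γ`-cover: infinite family of open sets, every point in all but finitely many members. -/
def IsGammaCover (𝒰 : Set (Set X)) : Prop :=
  𝒰.Infinite ∧ (∀ U ∈ 𝒰, IsOpen U) ∧ ∀ x : X, {U ∈ 𝒰 | x ∉ U}.Finite

/-- An open cover of `X`. -/
def IsOpenCover (𝒰 : Set (Set X)) : Prop :=
  (∀ U ∈ 𝒰, IsOpen U) ∧ ∀ x : X, ∃ U ∈ 𝒰, x ∈ U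

/-- The family `𝒪_{𝔅ˢ}` of countable open `𝔅ˢ`-covers. -/
def OBs (𝔅 : BornologyOn X) : Set (Set (Set X)) :=
  {𝒰 | 𝒰.Countable ∧ IsOpenBCover 𝔅 𝒰}

/-- The family `Γ_{𝔅ˢ}` of countable `γ_{𝔅ˢ}`-covers. -/
def GBs (𝔅 : BornologyOn X) : Set (Set (Set X)) :=
  {𝒰 | 𝒰.Countable ∧ IsGammaBCover 𝔅 𝒰}

/-- The family `𝒪` of countable open covers. -/
def Ocov (X : Type*) [MetricSpace X] : Set (Set (Set X)) :=
  {𝒰 | 𝒰.Countable ∧ IsOpenCover 𝒰}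

/-- The selection principle `S₁(𝒜, ℬ)`. -/
def S1 (𝒜 ℬ : Set (Set (Set X))) : Prop :=
  ∀ 𝒰 : ℕ → Set (Set X), (∀ n, 𝒰 n ∈ 𝒜) →
    ∃ sel : ℕ → Set X, (∀ n, sel n ∈ 𝒰 n) ∧ Set.range sel ∈ ℬ

/-- The selection principle `S_fin(𝒜, ℬ)`. -/
def Sfin (𝒜 ℬ : Set (Set (Set X))) : Prop :=
  ∀ 𝒰 : ℕ → Set (Set X), (∀ n, 𝒰 n ∈ 𝒜) →
    ∃ 𝒱 : ℕ → Set (Set X), (∀ n, 𝒱 n ⊆ 𝒰 n ∧ (𝒱 n).Finite) ∧ (⋃ n, 𝒱 n) ∈ ℬ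

/-- The selection principle `U_fin(𝒜, ℬ)`. -/
def Ufin (𝒜 ℬ : Set (Set (Set X))) : Prop :=
  ∀ 𝒰 : ℕ → Set (Set X), (∀ n, 𝒰 n ∈ 𝒜) →
    ∃ 𝒱 : ℕ → Set (Set X), (∀ n, 𝒱 n ⊆ 𝒰 n ∧ (𝒱 n).Finite) ∧
      ((Set.range fun n => ⋃₀ 𝒱 n) ∈ ℬ ∨ ∃ n, ⋃₀ 𝒱 n = univ)

/-- ONE has a winning strategy in `G₁(𝒜, ℬ)`. -/
def OneWinsG1 (𝒜 ℬ : Set (Set (Set X))) : Prop :=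
  ∃ σ : List (Set X) → Set (Set X),
    (∀ h, σ h ∈ 𝒜) ∧
    ∀ play : ℕ → Set X,
      (∀ n, play n ∈ σ (List.ofFn fun i : Fin n => play i.1)) →
      Set.range play ∉ ℬ

/-- ONE has a winning strategy in `G_fin(𝒜, ℬ)`. -/
def OneWinsGfin (𝒜 ℬ : Set (Set (Set X))) : Prop :=
  ∃ σ : List (Set (Set X)) → Set (Set X),
    (∀ h, σ h ∈ 𝒜) ∧
    ∀ play : ℕ → Set (Set X),
      (∀ n, play n ⊆ σ (List.ofFn fun i : Fin n => play i.1) ∧ (play n).Finite) →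
      (⋃ n, play n) ∉ ℬ

/-- The winning condition in the `𝔅ˢ`-Hurewicz game / property: every `B ∈ 𝔅` is
eventually `δ`-enlarged into some member of `𝒱ₙ`. -/
def HurSel (𝔅 : BornologyOn X) (𝒱 : ℕ → Set (Set X)) : Prop :=
  ∀ B ∈ 𝔅.sets, ∃ n₀, ∀ n ≥ n₀, ∃ δ > 0, ∃ U ∈ 𝒱 n, enlarge B δ ⊆ U

/-- The strong `𝔅`-Hurewicz property. -/
def BsHurewicz (𝔅 : BornologyOn X) : Prop :=
  ∀ 𝒰 : ℕ → Set (Set X), (∀ n, 𝒰 n ∈ OBs 𝔅) →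
    ∃ 𝒱 : ℕ → Set (Set X), (∀ n, 𝒱 n ⊆ 𝒰 n ∧ (𝒱 n).Finite) ∧ HurSel 𝔅 𝒱

/-- ONE has a winning strategy in the `𝔅ˢ`-Hurewicz game. -/
def OneWinsHurewicz (𝔅 : BornologyOn X) : Prop :=
  ∃ σ : List (Set (Set X)) → Set (Set X),
    (∀ h, σ h ∈ OBs 𝔅) ∧
    ∀ play : ℕ → Set (Set X),
      (∀ n, play n ⊆ σ (List.ofFn fun i : Fin n => play i.1) ∧ (play n).Finite) →
      ¬ HurSel 𝔅 play

/-- A `𝔅ˢ`-groupable cover. -/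
def BsGroupable (𝔅 : BornologyOn X) (𝒰 : Set (Set X)) : Prop :=
  ∃ 𝒢 : ℕ → Set (Set X), (∀ n, (𝒢 n).Finite) ∧
    (∀ m n, m ≠ n → Disjoint (𝒢 m) (𝒢 n)) ∧ (⋃ n, 𝒢 n) = 𝒰 ∧ HurSel 𝔅 𝒢

/-- The family `𝒪_{𝔅ˢ}^{gp}` of `𝔅ˢ`-groupable open covers. -/
def OBsgp (𝔅 : BornologyOn X) : Set (Set (Set X)) :=
  {𝒰 | IsOpenCover 𝒰 ∧ BsGroupable 𝔅 𝒰}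

/-- The basic `τ_𝔅ˢ` neighbourhood `[B, ε]ˢ(f)` in `C(X)`. -/
def sball (f : C(X, ℝ)) (B : Set X) (ε : ℝ) : Set C(X, ℝ) :=
  {g | ∃ δ > 0, ∀ x ∈ enlarge B δ, |f x - g x| < ε}

/-- The topology `τ_𝔅ˢ` of strong uniform convergence on `𝔅` on `C(X)`. -/
def tauBs (𝔅 : BornologyOn X) : TopologicalSpace C(X, ℝ) :=
  TopologicalSpace.generateFrom
    {S | ∃ f : C(X, ℝ), ∃ B ∈ 𝔅.sets, ∃ ε > 0, S = sball f B ε}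

/-- Countable `T`-tightness of a topological space. -/
def CountableTTightness {Y : Type*} (t : TopologicalSpace Y) : Prop :=
  ∀ ρ : Cardinal.{0}, ρ.IsRegular → Cardinal.aleph0 < ρ →
    ∀ A : Ordinal.{0} → Set Y, (∀ α β, α ≤ β → A α ⊆ A β) →
      (∀ α, α < ρ.ord → @IsClosed _ t (A α)) →
      @IsClosed _ t (⋃ α ∈ {α | α < ρ.ord}, A α)

-- ===== auxiliary lemmas =====

lemma enlarge_mono' {B : Set X} {δ δ' : ℝ} (h : δ ≤ δ') : enlarge B δ ⊆ enlarge B δ' := by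
  intro x hx
  simp only [enlarge, mem_iUnion, exists_prop] at hx ⊢
  obtain ⟨y, hy, hxy⟩ := hx
  exact ⟨y, hy, ball_subset_ball h hxy⟩

lemma subset_enlarge' {B : Set X} {δ : ℝ} (h : 0 < δ) : B ⊆ enlarge B δ := by
  intro x hx
  simp only [enlarge, mem_iUnion, exists_prop]
  exact ⟨x, hx, mem_ball_self h⟩

/-- The "meet" covers: intersections of one member from each of `𝒰 0, …, 𝒰 m`. -/
def Meets (𝒰 : ℕ → Set (Set X)) (m : ℕ) : Set (Set X) :=
  (fun g : Fin (m+1) → Set X => ⋂ i, g i) '' (univ.pi fun i => 𝒰 (i : ℕ))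

lemma Meets_mem (𝔅 : BornologyOn X) (𝒰 : ℕ → Set (Set X))
    (h : ∀ n, 𝒰 n ∈ OBs 𝔅) (m : ℕ) : Meets 𝒰 m ∈ OBs 𝔅 := by
  refine ⟨?_, ?_, ?_, ?_, ?_⟩
  · exact (countable_univ_pi fun i : Fin (m+1) => (h (i : ℕ)).1).image _
  · rintro U ⟨g, hg, rfl⟩
    exact isOpen_iInter_of_finite fun i => (h (i : ℕ)).2.1 _ (hg i (mem_univ i))
  · intro x
    have hx : ∀ i : Fin (m+1), ∃ U ∈ 𝒰 (i : ℕ), x ∈ U := fun i => (h (i : ℕ)).2.2.1 x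
    choose g hg hxg using hx
    exact ⟨⋂ i, g i, ⟨g, fun i _ => hg i, rfl⟩, mem_iInter.2 hxg⟩
  · rintro ⟨g, hg, heq⟩
    have h0 : g ⟨0, Nat.succ_pos m⟩ = univ :=
      eq_univ_of_univ_subset (heq ▸ iInter_subset g ⟨0, Nat.succ_pos m⟩)
    exact (h 0).2.2.2.1 (h0 ▸ hg ⟨0, Nat.succ_pos m⟩ (mem_univ _))
  · intro B hB
    have hx : ∀ i : Fin (m+1), ∃ U ∈ 𝒰 (i : ℕ), ∃ δ > 0, enlarge B δ ⊆ U :=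
      fun i => (h (i : ℕ)).2.2.2.2 B hB
    choose g hg δ hδ hsub using hx
    have hne : (Finset.univ : Finset (Fin (m+1))).Nonempty := Finset.univ_nonempty
    refine ⟨⋂ i, g i, ⟨g, fun i _ => hg i, rfl⟩, Finset.univ.inf' hne δ, ?_, ?_⟩
    · exact (Finset.lt_inf'_iff hne).2 fun i _ => hδ i
    · refine subset_iInter fun i => ?_
      exact (enlarge_mono' (Finset.inf'_le δ (Finset.mem_univ i))).trans (hsub i)

lemma exists_superset_mem (𝔅 : BornologyOn X) (hne : ∃ B, B ∈ 𝔅.sets)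
    {S : Set X} (hS : S.Finite) : ∃ B ∈ 𝔅.sets, S ⊆ B := by
  obtain ⟨B₀, hB₀⟩ := hne
  refine Set.Finite.induction_on (motive := fun S _ => ∃ B ∈ 𝔅.sets, S ⊆ B) S hS ⟨B₀, hB₀, empty_subset _⟩ ?_
  intro a s _ _ ih
  obtain ⟨B, hB, hSB⟩ := ih
  obtain ⟨C, hC, haC⟩ := 𝔅.covers a
  exact ⟨C ∪ B, 𝔅.union_mem hC hB,
    insert_subset (mem_union_left _ haC) (hSB.trans subset_union_right)⟩

lemma exists_mono_seq_aux {T : ℕ → Set ℕ} (h : ∀ N i, ∃ k, N < k ∧ k ∈ T i) :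
    ∃ kk : ℕ → ℕ, StrictMono kk ∧ ∀ n, kk n ∈ T n := by
  choose f hf1 hf2 using h
  refine ⟨fun n => Nat.rec (f 0 0) (fun n ih => f ih (n+1)) n,
    strictMono_nat_of_lt_succ fun n => hf1 _ _, fun n => ?_⟩
  cases n with
  | zero => exact hf2 0 0
  | succ n => exact hf2 _ _

theorem stmt7 (𝔅 : BornologyOn X) (hcb : HasClosedBase 𝔅) :
    S1 (OBs 𝔅) (GBs 𝔅) ↔ Sfin (OBs 𝔅) (GBs 𝔅) := by
  constructor
  · -- S1 → Sfin
    intro h1 𝒰 h𝒰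
    obtain ⟨sel, hsel, hmem⟩ := h1 𝒰 h𝒰
    refine ⟨fun n => {sel n}, fun n => ⟨singleton_subset_iff.2 (hsel n), finite_singleton _⟩, ?_⟩
    have : (⋃ n, ({sel n} : Set (Set X))) = Set.range sel := by
      ext U; simp [eq_comm]
    rwa [this]
  · -- Sfin → S1
    intro hf 𝒰 h𝒰
    obtain ⟨𝒱, h𝒱, hW⟩ := hf (Meets 𝒰) (fun m => Meets_mem 𝔅 𝒰 h𝒰 m)
    set W : Set (Set X) := ⋃ m, 𝒱 m with hWdef
    obtain ⟨hWc, hWinf, hWopen, hWbad⟩ := hW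
    have hVfin : ∀ m, (𝒱 m).Finite := fun m => (h𝒱 m).2
    -- the "tails": elements of W that only appear at level ≥ i
    set T : ℕ → Set (Set X) := fun i => W \ ⋃ m ∈ Finset.range i, 𝒱 m with hTdef
    have hTinf : ∀ i, (T i).Infinite := fun i =>
      hWinf.diff ((Finset.range i).finite_toSet.biUnion fun m _ => hVfin m)
    have hTkey : ∀ i A, A ∈ T i → ∃ m, i ≤ m ∧ A ∈ 𝒱 m := by
      rintro i A ⟨hAW, hA2⟩
      obtain ⟨s, ⟨m, rfl⟩, hms⟩ := hAW
      refine ⟨m, ?_, hms⟩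
      by_contra hlt
      exact hA2 (mem_biUnion (Finset.mem_range.2 (lt_of_not_ge hlt)) hms)
    -- enumerate W
    haveI := hWc.to_subtype
    haveI := hWinf.to_subtype
    obtain ⟨e⟩ : Nonempty (ℕ ≃ W) := nonempty_equiv_of_countable
    set E : ℕ → Set X := fun n => (e n : Set X) with hEdef
    have hEinj : Function.Injective E := fun a b hab => e.injective (Subtype.val_injective hab)
    have hstep : ∀ (N i : ℕ), ∃ k, N < k ∧ k ∈ {k | E k ∈ T i} := by
      intro N i
      have hinf : {k | E k ∈ T i}.Infinite := by
        intro hfin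
        refine hTinf i ((hfin.image E).subset fun A hA => ?_)
        refine ⟨e.symm ⟨A, hA.1⟩, ?_, ?_⟩
        · show E (e.symm ⟨A, hA.1⟩) ∈ T i
          simp only [hEdef, Equiv.apply_symm_apply]
          exact hA
        · simp only [hEdef, Equiv.apply_symm_apply]
      obtain ⟨k, hk, hNk⟩ := hinf.exists_gt N
      exact ⟨k, hNk, hk⟩
    obtain ⟨kk, hkmono, hkT⟩ := exists_mono_seq_aux hstep
    -- decompose each chosen element of the meet cover
    have hA : ∀ i, ∃ m, i ≤ m ∧ E (kk i) ∈ 𝒱 m := fun i => hTkey i _ (hkT i)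
    choose m hm hAm using hA
    have hAM : ∀ i, ∃ g : Fin (m i + 1) → Set X,
        (∀ j : Fin (m i + 1), g j ∈ 𝒰 (j : ℕ)) ∧ ⋂ j, g j = E (kk i) := by
      intro i
      obtain ⟨g, hg, hge⟩ := (h𝒱 (m i)).1 (hAm i)
      exact ⟨g, fun j => hg j (mem_univ j), hge⟩
    choose g hg1 hg2 using hAM
    set sel : ℕ → Set X := fun i => g i ⟨i, Nat.lt_succ_of_le (hm i)⟩ with hseldef
    have hselmem : ∀ i, sel i ∈ 𝒰 i := fun i => hg1 i ⟨i, Nat.lt_succ_of_le (hm i)⟩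
    have hAsub : ∀ i, E (kk i) ⊆ sel i := by
      intro i
      rw [← hg2 i]
      exact iInter_subset (g i) _
    -- goodness
    have hgood : ∀ B ∈ 𝔅.sets, ∃ i₀, ∀ i, i₀ ≤ i → ∃ δ > 0, enlarge B δ ⊆ sel i := by
      intro B hB
      have hbad := hWbad B hB
      have hinj : Function.Injective (E ∘ kk) := hEinj.comp hkmono.injective
      have hfin : ((E ∘ kk) ⁻¹' {U ∈ W | ¬ ∃ δ > 0, enlarge B δ ⊆ U}).Finite :=
        hbad.preimage hinj.injOn
      obtain ⟨b, hb⟩ := hfin.bddAbove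
      refine ⟨b + 1, fun i hi => ?_⟩
      have hiW : E (kk i) ∈ W := (hkT i).1
      have hni : ¬ (E (kk i) ∈ {U ∈ W | ¬ ∃ δ > 0, enlarge B δ ⊆ U}) := by
        intro hcon
        exact absurd (hb hcon) (by omega)
      have : ∃ δ > 0, enlarge B δ ⊆ E (kk i) := by
        by_contra hc
        exact hni ⟨hiW, hc⟩
      obtain ⟨δ, hδ, hsub⟩ := this
      exact ⟨δ, hδ, hsub.trans (hAsub i)⟩
    refine ⟨sel, hselmem, countable_range sel, ?_, ?_, ?_⟩
    · -- infinite
      intro hfin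
      have hne_univ : ∀ i, sel i ≠ univ := by
        intro i h
        exact (h𝒰 i).2.2.2.1 (h ▸ hselmem i)
      obtain ⟨x₀, hx₀⟩ := ne_univ_iff_exists_notMem _ |>.1 (hne_univ 0)
      haveI : Nonempty X := ⟨x₀⟩
      have hq : ∀ U : Set X, ∃ x : X, U ∈ Set.range sel → x ∉ U := by
        intro U
        by_cases hU : U ∈ Set.range sel
        · obtain ⟨i, rfl⟩ := hU
          obtain ⟨x, hx⟩ := ne_univ_iff_exists_notMem _ |>.1 (hne_univ i)
          exact ⟨x, fun _ => hx⟩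
        · exact ⟨Classical.arbitrary X, fun h => absurd h hU⟩
      choose q hq using hq
      obtain ⟨B0, hB0, _⟩ := 𝔅.covers x₀
      obtain ⟨B, hB, hSB⟩ := exists_superset_mem 𝔅 ⟨B0, hB0⟩ (hfin.image q)
      obtain ⟨i₀, hi₀⟩ := hgood B hB
      obtain ⟨δ, hδ, hsub⟩ := hi₀ i₀ le_rfl
      have h1 : q (sel i₀) ∈ B := hSB (mem_image_of_mem q ⟨i₀, rfl⟩)
      exact hq (sel i₀) ⟨i₀, rfl⟩ ((hsub (subset_enlarge' hδ h1)))
    · -- open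
      rintro U ⟨i, rfl⟩
      exact (h𝒰 i).2.1 _ (hselmem i)
    · -- bad sets finite
      intro B hB
      obtain ⟨i₀, hi₀⟩ := hgood B hB
      refine ((finite_Iio i₀).image sel).subset ?_
      rintro U ⟨⟨i, rfl⟩, hbadU⟩
      rcases lt_or_ge i i₀ with h | h
      · exact mem_image_of_mem sel h
      · exact absurd (hi₀ i h) hbadU
end

section
/- Let 𝔅 be a bornology with closed base on a metric space X. Then X has the 𝔅ˢ-Hurewicz property if and only if ONE has no winning strategy in the 𝔅ˢ-Hurewicz game on X. -/
open Set Metric Filter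

variable {X : Type*} [MetricSpace X]

section AuxGame

variable {β : Type*}

/-- Legal histories against strategy `σ` for TWO playing finite subsets. -/
def LegalH (σ : List (Set β) → Set β) (l : List (Set β)) : Prop :=
  ∀ k, (h : k < l.length) → l[k] ⊆ σ (l.take k) ∧ (l[k]).Finite

lemma legalH_nil (σ : List (Set β) → Set β) : LegalH σ ([] : List (Set β)) := by
  intro k h; simp at h

lemma legalH_take {σ : List (Set β) → Set β} {l : List (Set β)}
    (hl : LegalH σ l) (m : ℕ) : LegalH σ (l.take m) := by
  intro k hk
  have hkm : k < m := lt_of_lt_of_le hk (by simp [List.length_take])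
  have hkl : k < l.length := lt_of_lt_of_le hk (by simp [List.length_take])
  have h1 : (l.take m)[k] = l[k] := List.getElem_take
  have h2 : (l.take m).take k = l.take k := by
    rw [List.take_take]; congr 1; omega
  rw [h1, h2]; exact hl k hkl

lemma legalH_snoc {σ : List (Set β) → Set β} {l : List (Set β)} {v : Set β}
    (hl : LegalH σ l) (hv : v ⊆ σ l) (hf : v.Finite) : LegalH σ (l ++ [v]) := by
  intro k hk
  have hk' : k < l.length + 1 := by simpa using hk
  rcases Nat.lt_or_ge k l.length with h | h
  · have h1 : (l ++ [v])[k] = l[k] := List.getElem_append_left h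
    have h2 : (l ++ [v]).take k = l.take k := List.take_append_of_le_length (le_of_lt h)
    rw [h1, h2]; exact hl k h
  · have hk0 : k = l.length := by omega
    have h1 : (l ++ [v])[k] = v := List.getElem_concat_length hk0 hk
    have h2 : (l ++ [v]).take k = l := by
      rw [List.take_append_of_le_length (le_of_eq hk0), hk0, List.take_length]
    rw [h1, h2]; exact ⟨hv, hf⟩

lemma legalH_countable {σ : List (Set β) → Set β} (hσ : ∀ h, (σ h).Countable) :
    {l | LegalH σ l}.Countable := by
  have key : ∀ n : ℕ, {l | LegalH σ l ∧ l.length = n}.Countable := by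
    intro n
    induction n with
    | zero =>
        refine (Set.countable_singleton ([] : List (Set β))).mono ?_
        rintro l ⟨-, hl⟩
        simp [List.length_eq_zero_iff.mp hl]
    | succ n ih =>
        have hbig : (⋃ t ∈ {l | LegalH σ l ∧ l.length = n},
            (fun v => t ++ [v]) '' {v : Set β | v.Finite ∧ v ⊆ σ t}).Countable := by
          refine Set.Countable.biUnion ih fun t _ => ?_
          exact (Set.countable_setOf_finite_subset (hσ t)).image _
        refine hbig.mono ?_
        rintro l ⟨hl, hlen⟩
        have hn : n < l.length := by omega
        have hdec : l = l.take n ++ [l[n]] := by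
          conv_lhs => rw [← List.take_append_drop n l]
          congr 1
          rw [List.drop_eq_getElem_cons hn]
          congr 1
          apply List.drop_eq_nil_of_le
          omega
        refine Set.mem_biUnion (s := {l | LegalH σ l ∧ l.length = n})
          (x := l.take n) ⟨legalH_take hl n, by simp [List.length_take]; omega⟩ ?_
        refine ⟨l[n], ⟨(hl n hn).2, (hl n hn).1⟩, hdec.symm⟩
  have : {l | LegalH σ l} = ⋃ n : ℕ, {l | LegalH σ l ∧ l.length = n} := by
    ext l; simp
  rw [this]
  exact Set.countable_iUnion key

/-- The history generated by TWO always responding `f` to the current history. -/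
def histAux (f : List (Set β) → Set β) : ℕ → List (Set β)
  | 0 => []
  | n + 1 => histAux f n ++ [f (histAux f n)]

lemma histAux_length (f : List (Set β) → Set β) (n : ℕ) : (histAux f n).length = n := by
  induction n with
  | zero => rfl
  | succ n ih => simp [histAux, ih]

lemma ofFn_histAux (f : List (Set β) → Set β) (n : ℕ) :
    (List.ofFn fun i : Fin n => f (histAux f i.1)) = histAux f n := by
  induction n with
  | zero => simp [histAux]
  | succ n ih =>
      rw [List.ofFn_succ']
      simp only [List.concat_eq_append, Fin.coe_castSucc, Fin.val_last, histAux]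
      rw [ih]

end AuxGame

theorem stmt13 (𝔅 : BornologyOn X) (hcb : HasClosedBase 𝔅) :
    BsHurewicz 𝔅 ↔ ¬ OneWinsHurewicz 𝔅 := by
  constructor
  · -- the Hurewicz property implies ONE has no winning strategy
    rintro hH ⟨σ, hσ, hwin⟩
    have hcnt : ∀ h, (σ h).Countable := fun h => (hσ h).1
    have hTc : {l | LegalH σ l}.Countable := legalH_countable hcnt
    obtain ⟨e, he⟩ := hTc.exists_eq_range ⟨[], legalH_nil σ⟩
    obtain ⟨𝒱, h𝒱, hsel⟩ := hH (fun k => σ (e k)) (fun k => hσ (e k))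
    set idx : List (Set (Set X)) → ℕ := Function.invFun e with hidx
    have hinv : ∀ t, LegalH σ t → e (idx t) = t := by
      intro t ht
      apply Function.invFun_eq
      have : t ∈ Set.range e := by rw [← he]; exact ht
      exact this
    set f : List (Set (Set X)) → Set (Set X) := fun t => 𝒱 (idx t) with hf
    have hsubσ : ∀ t, LegalH σ t → f t ⊆ σ t := by
      intro t ht
      have h1 : 𝒱 (idx t) ⊆ σ (e (idx t)) := (h𝒱 (idx t)).1
      rwa [hinv t ht] at h1
    have hlegal : ∀ n, LegalH σ (histAux f n) := by
      intro n
      induction n with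
      | zero => exact legalH_nil σ
      | succ n ih => exact legalH_snoc ih (hsubσ _ ih) (h𝒱 _).2
    set play : ℕ → Set (Set X) := fun n => f (histAux f n) with hplay
    have hofn : ∀ n, (List.ofFn fun i : Fin n => play i.1) = histAux f n :=
      ofFn_histAux f
    have hlegalplay : ∀ n,
        play n ⊆ σ (List.ofFn fun i : Fin n => play i.1) ∧ (play n).Finite := by
      intro n
      rw [hofn n]
      exact ⟨hsubσ _ (hlegal n), (h𝒱 _).2⟩
    refine hwin play hlegalplay ?_
    intro B hB
    obtain ⟨n₀, hn₀⟩ := hsel B hB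
    have hg : Function.Injective (fun n => idx (histAux f n)) := by
      intro m n hmn
      have h1 : histAux f m = histAux f n := by
        rw [← hinv _ (hlegal m), ← hinv _ (hlegal n)]
        exact congrArg e hmn
      have h2 := congrArg List.length h1
      simpa [histAux_length] using h2
    have hfin : {n : ℕ | idx (histAux f n) < n₀}.Finite := by
      have heq : {n : ℕ | idx (histAux f n) < n₀}
          = (fun n => idx (histAux f n)) ⁻¹' (Set.Iio n₀) := rfl
      rw [heq]
      exact Set.Finite.preimage hg.injOn (Set.finite_Iio n₀)
    obtain ⟨N, hN⟩ := hfin.bddAbove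
    refine ⟨N + 1, fun n hn => ?_⟩
    have hge : n₀ ≤ idx (histAux f n) := by
      by_contra hlt
      have hmem : n ∈ {n : ℕ | idx (histAux f n) < n₀} := not_le.mp hlt
      have := hN hmem
      omega
    exact hn₀ _ hge
  · -- no winning strategy for ONE implies the Hurewicz property
    intro hno 𝒰 h𝒰
    by_contra hcon
    apply hno
    refine ⟨fun h => 𝒰 h.length, fun h => h𝒰 _, ?_⟩
    intro play hplay hHS
    apply hcon
    refine ⟨play, fun n => ?_, hHS⟩
    have h1 := hplay n
    simpa using h1
end
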